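/- Under the hypotheses of the previous interconnection setting—Σᵢ (i ∈ {1,2}) linear systems ẋᵢ = Aᵢxᵢ + Bᵢuᵢ, yᵢ = Cᵢxᵢ + Dᵢuᵢ that are pᵢ-dissipative with common rate λ ≥ 0, margins εᵢ ≥ 0, storages Pᵢ of inertia pᵢ and supply matrices (Qᵢ, Lᵢ, Rᵢ), interconnected by u₁ = −y₂ + v₁, u₂ = y₁ + v₂—assume additionally that the symmetric matrix [[Q₁+R₂, −L₁+L₂ᵀ],[−L₁ᵀ+L₂, Q₂+R₁]] is negative semidefinite and that v₁ = 0 and v₂ = 0. Then, with P = diag(P₁,P₂) and ε = min(ε₁,ε₂), every tuple (x₁,x₂,u₁,u₂) satisfying y₁ = C₁x₁ + D₁u₁, y₂ = C₂x₂ + D₂u₂, u₁ = −y₂ and u₂ = y₁ satisfies ẋᵀPx + xᵀPẋ + 2λ·xᵀPx + ε·xᵀx ≤ 0, where x = (x₁,x₂) and ẋ = (A₁x₁+B₁u₁, A₂x₂+B₂u₂); that is, the closed-loop system is (p₁+p₂)-dominant with rate λ (strictly if ε₁ > 0 and ε₂ > 0). -/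

import Mathlib

open Matrix

/-- `M ⪯ N` iff `N - M` is positive semidefinite. -/
def matLE {m : Type*} [Fintype m] (M N : Matrix m m ℝ) : Prop := (N - M).PosSemidef

/-- A real symmetric matrix has inertia `p`: exactly `p` negative eigenvalues,
`card m − p` positive eigenvalues, and no zero eigenvalues, counted with multiplicity
(as roots of the characteristic polynomial). -/
def hasInertia {m : Type*} [Fintype m] [DecidableEq m]
    (P : Matrix m m ℝ) (p : ℕ) : Prop :=
  Multiset.countP (fun μ : ℝ => μ < 0) P.charpoly.roots = p ∧
  Multiset.countP (fun μ : ℝ => 0 < μ) P.charpoly.roots = Fintype.card m - p ∧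
  (0 : ℝ) ∉ P.charpoly.roots

/-- Number of complex eigenvalues (with algebraic multiplicity) of a real matrix
with strictly positive real part. -/
noncomputable def posReCount {m : Type*} [Fintype m] [DecidableEq m]
    (A : Matrix m m ℝ) : ℕ :=
  Multiset.countP (fun μ : ℂ => 0 < μ.re) (A.map Complex.ofReal).charpoly.roots

/-- Number of complex eigenvalues (with algebraic multiplicity) of a real matrix
with strictly negative real part. -/
noncomputable def negReCount {m : Type*} [Fintype m] [DecidableEq m]
    (A : Matrix m m ℝ) : ℕ :=
  Multiset.countP (fun μ : ℂ => μ.re < 0) (A.map Complex.ofReal).charpoly.roots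

/-- The quadratic form `xᵀ P x`. -/
def quadForm {m : Type*} [Fintype m] (P : Matrix m m ℝ) (x : m → ℝ) : ℝ :=
  x ⬝ᵥ P.mulVec x

/-- Euclidean norm on `m → ℝ`. -/
noncomputable def enorm {m : Type*} [Fintype m] (x : m → ℝ) : ℝ :=
  Real.sqrt (x ⬝ᵥ x)

/-- `J` is the Jacobian of `f`. -/
def IsJacobianOf {n : ℕ} (J : (Fin n → ℝ) → Matrix (Fin n) (Fin n) ℝ)
    (f : (Fin n → ℝ) → (Fin n → ℝ)) : Prop :=
  ∀ x, HasFDerivAt f (LinearMap.toContinuousLinearMap ((J x).mulVecLin)) x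

/-- if moreover the closed-loop supply matrix is negative semidefinite
and v = 0, the negative feedback interconnection is (p₁+p₂)-dominant with rate λ. -/
theorem feedback_interconnection_dominant {n₁ n₂ m₁ m₂ : ℕ}
    (A₁ : Matrix (Fin n₁) (Fin n₁) ℝ) (B₁ : Matrix (Fin n₁) (Fin m₁) ℝ)
    (C₁ : Matrix (Fin m₂) (Fin n₁) ℝ) (D₁ : Matrix (Fin m₂) (Fin m₁) ℝ)
    (A₂ : Matrix (Fin n₂) (Fin n₂) ℝ) (B₂ : Matrix (Fin n₂) (Fin m₂) ℝ)
    (C₂ : Matrix (Fin m₁) (Fin n₂) ℝ) (D₂ : Matrix (Fin m₁) (Fin m₂) ℝ)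
    (P₁ : Matrix (Fin n₁) (Fin n₁) ℝ) (P₂ : Matrix (Fin n₂) (Fin n₂) ℝ)
    (Q₁ : Matrix (Fin m₂) (Fin m₂) ℝ) (L₁ : Matrix (Fin m₂) (Fin m₁) ℝ)
    (R₁ : Matrix (Fin m₁) (Fin m₁) ℝ)
    (Q₂ : Matrix (Fin m₁) (Fin m₁) ℝ) (L₂ : Matrix (Fin m₁) (Fin m₂) ℝ)
    (R₂ : Matrix (Fin m₂) (Fin m₂) ℝ)
    (p₁ p₂ : ℕ) (lam eps₁ eps₂ : ℝ)
    (hlam : 0 ≤ lam) (heps₁ : 0 ≤ eps₁) (heps₂ : 0 ≤ eps₂)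
    (hP₁symm : P₁.IsSymm) (hP₂symm : P₂.IsSymm)
    (hP₁in : hasInertia P₁ p₁) (hP₂in : hasInertia P₂ p₂)
    (hdiss₁ : ∀ (x₁ : Fin n₁ → ℝ) (u₁ : Fin m₁ → ℝ),
      (A₁.mulVec x₁ + B₁.mulVec u₁) ⬝ᵥ P₁.mulVec x₁
        + x₁ ⬝ᵥ P₁.mulVec (A₁.mulVec x₁ + B₁.mulVec u₁)
        + 2 * lam * (x₁ ⬝ᵥ P₁.mulVec x₁) + eps₁ * (x₁ ⬝ᵥ x₁)
      ≤ (C₁.mulVec x₁ + D₁.mulVec u₁) ⬝ᵥ Q₁.mulVec (C₁.mulVec x₁ + D₁.mulVec u₁)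
        + (C₁.mulVec x₁ + D₁.mulVec u₁) ⬝ᵥ L₁.mulVec u₁
        + u₁ ⬝ᵥ L₁ᵀ.mulVec (C₁.mulVec x₁ + D₁.mulVec u₁)
        + u₁ ⬝ᵥ R₁.mulVec u₁)
    (hdiss₂ : ∀ (x₂ : Fin n₂ → ℝ) (u₂ : Fin m₂ → ℝ),
      (A₂.mulVec x₂ + B₂.mulVec u₂) ⬝ᵥ P₂.mulVec x₂
        + x₂ ⬝ᵥ P₂.mulVec (A₂.mulVec x₂ + B₂.mulVec u₂)
        + 2 * lam * (x₂ ⬝ᵥ P₂.mulVec x₂) + eps₂ * (x₂ ⬝ᵥ x₂)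
      ≤ (C₂.mulVec x₂ + D₂.mulVec u₂) ⬝ᵥ Q₂.mulVec (C₂.mulVec x₂ + D₂.mulVec u₂)
        + (C₂.mulVec x₂ + D₂.mulVec u₂) ⬝ᵥ L₂.mulVec u₂
        + u₂ ⬝ᵥ L₂ᵀ.mulVec (C₂.mulVec x₂ + D₂.mulVec u₂)
        + u₂ ⬝ᵥ R₂.mulVec u₂)
    (hQcl : (-(Matrix.fromBlocks (Q₁ + R₂) (-L₁ + L₂ᵀ)
        (-L₁ᵀ + L₂) (Q₂ + R₁))).PosSemidef) :
    (Matrix.fromBlocks P₁ 0 0 P₂).IsSymm ∧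
    hasInertia (Matrix.fromBlocks P₁ 0 0 P₂) (p₁ + p₂) ∧
    (∀ (x₁ : Fin n₁ → ℝ) (x₂ : Fin n₂ → ℝ) (u₁ : Fin m₁ → ℝ) (u₂ : Fin m₂ → ℝ)
       (y₁ : Fin m₂ → ℝ) (y₂ : Fin m₁ → ℝ),
      y₁ = C₁.mulVec x₁ + D₁.mulVec u₁ →
      y₂ = C₂.mulVec x₂ + D₂.mulVec u₂ →
      u₁ = -y₂ →
      u₂ = y₁ →
      (Sum.elim (A₁.mulVec x₁ + B₁.mulVec u₁) (A₂.mulVec x₂ + B₂.mulVec u₂))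
          ⬝ᵥ (Matrix.fromBlocks P₁ 0 0 P₂).mulVec (Sum.elim x₁ x₂)
        + (Sum.elim x₁ x₂) ⬝ᵥ (Matrix.fromBlocks P₁ 0 0 P₂).mulVec
            (Sum.elim (A₁.mulVec x₁ + B₁.mulVec u₁) (A₂.mulVec x₂ + B₂.mulVec u₂))
        + 2 * lam * ((Sum.elim x₁ x₂) ⬝ᵥ (Matrix.fromBlocks P₁ 0 0 P₂).mulVec (Sum.elim x₁ x₂))
        + min eps₁ eps₂ * ((Sum.elim x₁ x₂) ⬝ᵥ (Sum.elim x₁ x₂))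
      ≤ 0) := by
  have hp1ne : P₁.charpoly ≠ 0 := P₁.charpoly_monic.ne_zero
  have hp2ne : P₂.charpoly ≠ 0 := P₂.charpoly_monic.ne_zero
  have hroots : (Matrix.fromBlocks P₁ 0 0 P₂).charpoly.roots
      = P₁.charpoly.roots + P₂.charpoly.roots := by
    rw [Matrix.charpoly_fromBlocks_zero₁₂, Polynomial.roots_mul (mul_ne_zero hp1ne hp2ne)]
  refine ⟨?_, ?_, ?_⟩
  · rw [Matrix.IsSymm, Matrix.fromBlocks_transpose]
    simp [hP₁symm.eq, hP₂symm.eq]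
  · obtain ⟨h1n, h1p, h1z⟩ := hP₁in
    obtain ⟨h2n, h2p, h2z⟩ := hP₂in
    have hle1 : p₁ ≤ n₁ := by
      rw [← h1n]
      calc Multiset.countP (fun μ : ℝ => μ < 0) P₁.charpoly.roots
          ≤ Multiset.card P₁.charpoly.roots := Multiset.countP_le_card _ _
        _ ≤ P₁.charpoly.natDegree := Polynomial.card_roots' _
        _ = n₁ := by simp
    have hle2 : p₂ ≤ n₂ := by
      rw [← h2n]
      calc Multiset.countP (fun μ : ℝ => μ < 0) P₂.charpoly.roots
          ≤ Multiset.card P₂.charpoly.roots := Multiset.countP_le_card _ _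
        _ ≤ P₂.charpoly.natDegree := Polynomial.card_roots' _
        _ = n₂ := by simp
    refine ⟨?_, ?_, ?_⟩
    · rw [hroots, Multiset.countP_add, h1n, h2n]
    · rw [hroots, Multiset.countP_add, h1p, h2p]
      simp only [Fintype.card_sum, Fintype.card_fin]
      omega
    · rw [hroots, Multiset.mem_add]
      rintro (h | h)
      · exact h1z h
      · exact h2z h
  · intro x₁ x₂ u₁ u₂ y₁ y₂ hy₁ hy₂ hu₁ hu₂
    have h1 := hdiss₁ x₁ u₁
    have h2 := hdiss₂ x₂ u₂
    rw [← hy₁] at h1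
    rw [← hy₂] at h2
    rw [hu₁] at h1
    rw [hu₂] at h2
    rw [hu₁, hu₂]
    have hz := hQcl.dotProduct_mulVec_nonneg (Sum.elim y₁ y₂)
    simp only [star_trivial, Matrix.neg_mulVec, dotProduct_neg,
      Matrix.fromBlocks_mulVec, sumElim_dotProduct_sumElim,
      Matrix.add_mulVec, dotProduct_add, Matrix.transpose_neg,
      neg_dotProduct, neg_add_rev, neg_neg,
      Sum.elim_comp_inl, Sum.elim_comp_inr] at hz
    simp only [Matrix.mulVec_neg, dotProduct_neg, neg_dotProduct, neg_neg] at h1 h2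
    have hxx1 : 0 ≤ x₁ ⬝ᵥ x₁ := Finset.sum_nonneg fun i _ => mul_self_nonneg _
    have hxx2 : 0 ≤ x₂ ⬝ᵥ x₂ := Finset.sum_nonneg fun i _ => mul_self_nonneg _
    have e1 : min eps₁ eps₂ * (x₁ ⬝ᵥ x₁) ≤ eps₁ * (x₁ ⬝ᵥ x₁) :=
      mul_le_mul_of_nonneg_right (min_le_left _ _) hxx1
    have e2 : min eps₁ eps₂ * (x₂ ⬝ᵥ x₂) ≤ eps₂ * (x₂ ⬝ᵥ x₂) :=
      mul_le_mul_of_nonneg_right (min_le_right _ _) hxx2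
    simp only [Matrix.fromBlocks_mulVec, sumElim_dotProduct_sumElim,
      Matrix.zero_mulVec, add_zero, zero_add, dotProduct_add, mul_add,
      Matrix.mulVec_neg, dotProduct_neg, neg_dotProduct, neg_neg,
      Sum.elim_comp_inl, Sum.elim_comp_inr]
    linarith [h1, h2, hz]
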